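/- arXiv:2001.05907 — 2 statements merged into one kernel-verified Lean document; each statement's English description precedes it below -/
import Mathlib

section
/- For every t ≥ 1 and n = 2^t, the Barnes–Wall lattice BW_n is a full-rank lattice in ℝⁿ: it is an additive subgroup of ℝⁿ satisfying BW_n ⊆ ℤⁿ (hence discrete), it is a free ℤ-module of rank n, and its ℝ-linear span is all of ℝⁿ. -/
open Matrix

noncomputable section

/-- `Rmat n` is the `n × n` matrix `I_{n/2} ⊗ R(2)`, block diagonal with
`2 × 2` blocks `[[1, 1], [1, -1]]`, acting on row vectors on the right. -/
def Rmat (n : ℕ) : Matrix (Fin n) (Fin n) ℝ :=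
  Matrix.of fun i j =>
    if (i : ℕ) / 2 = (j : ℕ) / 2 then
      if (i : ℕ) % 2 = 1 ∧ (j : ℕ) % 2 = 1 then -1 else 1
    else 0

/-- Concatenation `(u, v)` of two `2^t`-dimensional vectors into a
`2^(t+1)`-dimensional vector. -/
def concat {t : ℕ} (u v : Fin (2 ^ t) → ℝ) : Fin (2 ^ (t + 1)) → ℝ := fun i =>
  if h : (i : ℕ) < 2 ^ t then u ⟨i, h⟩
  else v ⟨(i : ℕ) - 2 ^ t, by
    have hi := i.isLt
    have h2 : 2 ^ (t + 1) = 2 ^ t + 2 ^ t := by rw [pow_succ]; ring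
    omega⟩

/-- The Barnes–Wall lattices `BW_{2^t} ⊆ ℝ^{2^t}`, defined recursively by
`BW_2 = ℤ²` and `BW_{2n} = {(u, u + v) : u ∈ BW_n, v ∈ BW_n · R(n)}`. -/
def BW : ∀ t : ℕ, Set (Fin (2 ^ t) → ℝ)
  | 0 => {x | ∀ i, ∃ z : ℤ, x i = (z : ℝ)}
  | (t + 1) =>
    {x | ∃ u v : Fin (2 ^ t) → ℝ, u ∈ BW t ∧
      (∃ w ∈ BW t, v = Matrix.vecMul w (Rmat (2 ^ t))) ∧ x = concat u (u + v)}

/-- `RBW_n = {x · R(n) : x ∈ BW_n}`. -/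
def RBW (t : ℕ) : Set (Fin (2 ^ t) → ℝ) :=
  (fun x => Matrix.vecMul x (Rmat (2 ^ t))) '' BW t

/-- Squared Euclidean norm. -/
def sqnorm {m : ℕ} (x : Fin m → ℝ) : ℝ := ∑ i, x i ^ 2

/-- `minDist Λ` is the minimum of `‖x‖²` over nonzero `x ∈ Λ`. -/
def minDist {m : ℕ} (Λ : Set (Fin m → ℝ)) : ℝ :=
  sInf (sqnorm '' {x ∈ Λ | x ≠ 0})

/-! ### Auxiliary material -/

/-- Integer version of `Rmat`. -/
def Rz (n : ℕ) : Matrix (Fin n) (Fin n) ℤ :=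
  Matrix.of fun i j =>
    if (i : ℕ) / 2 = (j : ℕ) / 2 then
      if (i : ℕ) % 2 = 1 ∧ (j : ℕ) % 2 = 1 then -1 else 1
    else 0

lemma Rz_map (n : ℕ) : (Rz n).map (Int.cast : ℤ → ℝ) = Rmat n := by
  ext i j
  simp only [Rz, Rmat, Matrix.map_apply, of_apply]
  split_ifs <;> simp

lemma Rmat_sq {n : ℕ} (hn : 2 ∣ n) : Rmat n * Rmat n = (2 : ℝ) • 1 := by
  obtain ⟨m, rfl⟩ := hn
  ext i j
  have hi := i.isLt
  have hj := j.isLt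
  have hblt : 2 * ((i : ℕ) / 2) + 1 < 2 * m := by omega
  have halt : 2 * ((i : ℕ) / 2) < 2 * m := by omega
  have hab : (⟨2 * ((i : ℕ) / 2), halt⟩ : Fin (2 * m)) ≠ ⟨2 * ((i : ℕ) / 2) + 1, hblt⟩ := by
    simp only [ne_eq, Fin.mk.injEq]; omega
  have hsum : (Rmat (2 * m) * Rmat (2 * m)) i j
      = Rmat (2 * m) i ⟨2 * ((i : ℕ) / 2), halt⟩ * Rmat (2 * m) ⟨2 * ((i : ℕ) / 2), halt⟩ j
      + Rmat (2 * m) i ⟨2 * ((i : ℕ) / 2) + 1, hblt⟩ * Rmat (2 * m) ⟨2 * ((i : ℕ) / 2) + 1, hblt⟩ j := by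
    rw [mul_apply, ← Finset.sum_pair (f := fun k => Rmat (2 * m) i k * Rmat (2 * m) k j) hab]
    refine (Finset.sum_subset (Finset.subset_univ _) ?_).symm
    intro k _ hk
    simp only [Finset.mem_insert, Finset.mem_singleton, Fin.ext_iff, Fin.val_mk] at hk
    push_neg at hk
    have : ¬ (i : ℕ) / 2 = (k : ℕ) / 2 := by omega
    simp [Rmat, this]
  rw [hsum]
  have hia : Rmat (2 * m) i ⟨2 * ((i : ℕ) / 2), halt⟩ = 1 := by
    simp only [Rmat, of_apply, Fin.val_mk]
    rw [if_pos (by omega), if_neg (by omega)]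
  have hib : Rmat (2 * m) i ⟨2 * ((i : ℕ) / 2) + 1, hblt⟩ = if (i : ℕ) % 2 = 1 then -1 else 1 := by
    simp only [Rmat, of_apply, Fin.val_mk]
    rw [if_pos (by omega)]
    by_cases h : (i : ℕ) % 2 = 1
    · rw [if_pos ⟨h, by omega⟩, if_pos h]
    · rw [if_neg (by tauto), if_neg h]
  by_cases hij : (i : ℕ) / 2 = (j : ℕ) / 2
  · have haj : Rmat (2 * m) ⟨2 * ((i : ℕ) / 2), halt⟩ j = 1 := by
      simp only [Rmat, of_apply, Fin.val_mk]
      rw [if_pos (by omega), if_neg (by omega)]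
    have hbj : Rmat (2 * m) ⟨2 * ((i : ℕ) / 2) + 1, hblt⟩ j
        = if (j : ℕ) % 2 = 1 then -1 else 1 := by
      simp only [Rmat, of_apply, Fin.val_mk]
      rw [if_pos (by omega)]
      by_cases h : (j : ℕ) % 2 = 1
      · rw [if_pos ⟨by omega, h⟩, if_pos h]
      · rw [if_neg (by tauto), if_neg h]
    rw [hia, haj, hib, hbj, one_mul, Matrix.smul_apply, one_apply]
    by_cases hmod : (i : ℕ) % 2 = (j : ℕ) % 2
    · have hije : i = j := Fin.ext (by omega)
      rw [if_pos hije]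
      by_cases h : (i : ℕ) % 2 = 1
      · rw [if_pos h, if_pos (by omega)]; norm_num
      · rw [if_neg h, if_neg (by omega)]; norm_num
    · have hijn : i ≠ j := fun h => hmod (by rw [h])
      rw [if_neg hijn]
      by_cases h : (i : ℕ) % 2 = 1
      · rw [if_pos h, if_neg (by omega)]; norm_num
      · rw [if_neg h, if_pos (by omega)]; norm_num
  · have haj : Rmat (2 * m) ⟨2 * ((i : ℕ) / 2), halt⟩ j = 0 := by
      simp only [Rmat, of_apply, Fin.val_mk]
      rw [if_neg (by omega)]
    have hbj : Rmat (2 * m) ⟨2 * ((i : ℕ) / 2) + 1, hblt⟩ j = 0 := by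
      simp only [Rmat, of_apply, Fin.val_mk]
      rw [if_neg (by omega)]
    have hijn : i ≠ j := fun h => hij (by rw [h])
    rw [haj, hbj, Matrix.smul_apply, one_apply, if_neg hijn, mul_zero, mul_zero, add_zero, smul_zero]

lemma Rmat_one : Rmat 1 = 1 := by
  ext i j
  fin_cases i <;> fin_cases j <;> simp [Rmat]

lemma Rmat_det_ne (t : ℕ) : (Rmat (2 ^ t)).det ≠ 0 := by
  cases t with
  | zero =>
    rw [pow_zero, Rmat_one, det_one]; norm_num
  | succ s =>
    have h2 : (2 : ℕ) ∣ 2 ^ (s + 1) := ⟨2 ^ s, by rw [pow_succ]; ring⟩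
    have hs := congrArg det (Rmat_sq h2)
    rw [det_mul, det_smul, det_one, mul_one] at hs
    intro h0
    rw [h0, mul_zero] at hs
    exact absurd hs.symm (by positivity)

/-- The index equivalence used to split `Fin (2^(t+1))` into two halves. -/
def eqv (t : ℕ) : Fin (2 ^ t) ⊕ Fin (2 ^ t) ≃ Fin (2 ^ (t + 1)) :=
  finSumFinEquiv.trans (finCongr (by rw [pow_succ]; ring))

lemma eqv_inl (t : ℕ) (a : Fin (2 ^ t)) : ((eqv t) (Sum.inl a) : ℕ) = (a : ℕ) := by
  simp [eqv]

lemma eqv_inr (t : ℕ) (a : Fin (2 ^ t)) : ((eqv t) (Sum.inr a) : ℕ) = 2 ^ t + (a : ℕ) := by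
  simp [eqv]; omega

lemma concat_eq (t : ℕ) (u v : Fin (2 ^ t) → ℝ) :
    concat u v = Sum.elim u v ∘ (eqv t).symm := by
  funext i
  obtain ⟨s, rfl⟩ : ∃ s, eqv t s = i := ⟨(eqv t).symm i, Equiv.apply_symm_apply _ _⟩
  rw [Function.comp_apply, Equiv.symm_apply_apply]
  cases s with
  | inl a =>
    have h := eqv_inl t a
    simp only [Sum.elim_inl, concat]
    rw [dif_pos (by rw [h]; exact a.isLt)]
    exact congrArg u (Fin.ext (by simp [h]))
  | inr b =>
    have h := eqv_inr t b
    simp only [Sum.elim_inr, concat]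
    rw [dif_neg (by rw [h]; omega)]
    exact congrArg v (Fin.ext (by simp [h]))

lemma vecMul_blocks (t : ℕ) (A B₁ D : Matrix (Fin (2 ^ t)) (Fin (2 ^ t)) ℝ)
    (z : Fin (2 ^ (t + 1)) → ℝ) :
    Matrix.vecMul z ((fromBlocks A B₁ 0 D).submatrix (eqv t).symm (eqv t).symm) =
      concat (Matrix.vecMul (z ∘ (eqv t) ∘ Sum.inl) A)
        (Matrix.vecMul (z ∘ (eqv t) ∘ Sum.inl) B₁ + Matrix.vecMul (z ∘ (eqv t) ∘ Sum.inr) D) := by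
  rw [submatrix_vecMul_equiv, vecMul_fromBlocks, concat_eq]
  funext i
  simp [Function.comp_def, Matrix.vecMul_zero]

lemma bw_key (t : ℕ) : ∃ Bz : Matrix (Fin (2 ^ t)) (Fin (2 ^ t)) ℤ,
    (Bz.map (Int.cast : ℤ → ℝ)).det ≠ 0 ∧
    BW t = {x | ∃ z : Fin (2 ^ t) → ℤ,
      x = Matrix.vecMul (fun i => (z i : ℝ)) (Bz.map (Int.cast : ℤ → ℝ))} := by
  induction t with
  | zero =>
    refine ⟨1, ?_, ?_⟩
    · rw [Matrix.map_one _ Int.cast_zero Int.cast_one, det_one]; norm_num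
    · ext x
      simp only [BW, Set.mem_setOf_eq, Matrix.map_one _ Int.cast_zero Int.cast_one, vecMul_one]
      constructor
      · intro h
        exact ⟨fun i => (h i).choose, funext fun i => (h i).choose_spec⟩
      · rintro ⟨z, rfl⟩ i
        exact ⟨z i, rfl⟩
  | succ t ih =>
    obtain ⟨Bz, hdet, hset⟩ := ih
    set B := Bz.map (Int.cast : ℤ → ℝ) with hB
    have hmap : ((fromBlocks Bz Bz 0 (Bz * Rz (2 ^ t))).submatrix (eqv t).symm
          (eqv t).symm).map (Int.cast : ℤ → ℝ)
        = (fromBlocks B B 0 (B * Rmat (2 ^ t))).submatrix (eqv t).symm (eqv t).symm := by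
      ext i j
      rcases h1 : (eqv t).symm i with a | a <;> rcases h2 : (eqv t).symm j with b | b <;>
        simp only [Matrix.map_apply, submatrix_apply, h1, h2, fromBlocks_apply₁₁,
          fromBlocks_apply₁₂, fromBlocks_apply₂₁, fromBlocks_apply₂₂, Matrix.zero_apply,
          Int.cast_zero, hB, ← Rz_map, mul_apply]
      push_cast
      rfl
    refine ⟨(fromBlocks Bz Bz 0 (Bz * Rz (2 ^ t))).submatrix (eqv t).symm (eqv t).symm, ?_, ?_⟩
    · rw [hmap, det_submatrix_equiv_self, det_fromBlocks_zero₂₁, det_mul]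
      exact mul_ne_zero hdet (mul_ne_zero hdet (Rmat_det_ne t))
    · ext x
      constructor
      · intro hx
        simp only [BW, Set.mem_setOf_eq] at hx
        obtain ⟨u, v, hu, ⟨w, hw, rfl⟩, rfl⟩ := hx
        rw [hset] at hu hw
        obtain ⟨z1, rfl⟩ := hu
        obtain ⟨z2, rfl⟩ := hw
        refine ⟨fun i => Sum.elim z1 z2 ((eqv t).symm i), ?_⟩
        rw [hmap, vecMul_blocks]
        have e1 : ((fun i => ((Sum.elim z1 z2 ((eqv t).symm i) : ℤ) : ℝ)) ∘ (eqv t) ∘ Sum.inl)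
            = fun i => (z1 i : ℝ) := by
          funext a; simp
        have e2 : ((fun i => ((Sum.elim z1 z2 ((eqv t).symm i) : ℤ) : ℝ)) ∘ (eqv t) ∘ Sum.inr)
            = fun i => (z2 i : ℝ) := by
          funext a; simp
        rw [e1, e2, ← vecMul_vecMul]
      · rintro ⟨z, rfl⟩
        simp only [BW, Set.mem_setOf_eq]
        refine ⟨Matrix.vecMul (fun a => (z ((eqv t) (Sum.inl a)) : ℝ)) B,
          Matrix.vecMul (Matrix.vecMul (fun a => (z ((eqv t) (Sum.inr a)) : ℝ)) B)
            (Rmat (2 ^ t)), ?_,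
          ⟨Matrix.vecMul (fun a => (z ((eqv t) (Sum.inr a)) : ℝ)) B, ?_, rfl⟩, ?_⟩
        · rw [hset]; exact ⟨fun a => z ((eqv t) (Sum.inl a)), rfl⟩
        · rw [hset]; exact ⟨fun a => z ((eqv t) (Sum.inr a)), rfl⟩
        · rw [hmap, vecMul_blocks, ← vecMul_vecMul]
          rfl

/-- `BW_n` is a full-rank lattice in `ℝⁿ`: an additive subgroup of
`ℝⁿ` contained in `ℤⁿ` (hence discrete), a free `ℤ`-module of rank `n` (it is the
`ℤ`-row span of an invertible `n × n` matrix), and its `ℝ`-linear span is `ℝⁿ`. -/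
theorem bw_is_full_rank_lattice :
    ∀ t : ℕ, 1 ≤ t →
      (∃ S : AddSubgroup (Fin (2 ^ t) → ℝ), (S : Set (Fin (2 ^ t) → ℝ)) = BW t) ∧
      (∀ x ∈ BW t, ∀ i, ∃ z : ℤ, x i = (z : ℝ)) ∧
      (∃ B : Matrix (Fin (2 ^ t)) (Fin (2 ^ t)) ℝ, B.det ≠ 0 ∧
        BW t = {x | ∃ z : Fin (2 ^ t) → ℤ,
          x = Matrix.vecMul (fun i => (z i : ℝ)) B}) ∧
      Submodule.span ℝ (BW t) = ⊤ := by
  intro t _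
  obtain ⟨Bz, hdet, hset⟩ := bw_key t
  set B := Bz.map (Int.cast : ℤ → ℝ) with hB
  have hrow : ∀ i, (fun j => B i j) ∈ BW t := by
    intro i
    rw [hset]
    refine ⟨Pi.single i 1, ?_⟩
    funext j
    simp only [vecMul, dotProduct, Pi.single_apply]
    rw [Finset.sum_eq_single i]
    · simp
    · intro k _ hk
      simp [hk]
    · simp
  refine ⟨?_, ?_, ⟨B, hdet, hset⟩, ?_⟩
  · refine ⟨AddMonoidHom.range
      { toFun := fun z : Fin (2 ^ t) → ℤ => Matrix.vecMul (fun i => ((z i : ℤ) : ℝ)) B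
        map_zero' := by
          show Matrix.vecMul (fun i => (((0 : Fin (2 ^ t) → ℤ) i : ℤ) : ℝ)) B = 0
          have h0 : (fun i => (((0 : Fin (2 ^ t) → ℤ) i : ℤ) : ℝ)) = (0 : Fin (2 ^ t) → ℝ) := by
            funext i; simp
          rw [h0, Matrix.zero_vecMul]
        map_add' := by
          intro a b
          show Matrix.vecMul (fun i => (((a + b) i : ℤ) : ℝ)) B
            = Matrix.vecMul (fun i => ((a i : ℤ) : ℝ)) B
              + Matrix.vecMul (fun i => ((b i : ℤ) : ℝ)) B
          have ha : (fun i => (((a + b) i : ℤ) : ℝ))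
              = (fun i => ((a i : ℤ) : ℝ)) + fun i => ((b i : ℤ) : ℝ) := by
            funext i; simp only [Pi.add_apply]; push_cast; ring
          rw [ha, Matrix.add_vecMul] }, ?_⟩
    rw [hset]
    ext x
    simp only [AddMonoidHom.coe_range, AddMonoidHom.coe_mk, ZeroHom.coe_mk, Set.mem_range,
      Set.mem_setOf_eq]
    exact ⟨fun ⟨z, h⟩ => ⟨z, h.symm⟩, fun ⟨z, h⟩ => ⟨z, h.symm⟩⟩
  · intro x hx i
    rw [hset] at hx
    obtain ⟨z, rfl⟩ := hx
    refine ⟨∑ k, z k * Bz k i, ?_⟩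
    simp only [vecMul, dotProduct, hB, Matrix.map_apply]
    push_cast
    rfl
  · rw [eq_top_iff]
    rintro x -
    have hBu : IsUnit B.det := isUnit_iff_ne_zero.mpr hdet
    have hx : Matrix.vecMul (Matrix.vecMul x B⁻¹) B = x := by
      rw [vecMul_vecMul, Matrix.nonsing_inv_mul _ hBu, vecMul_one]
    rw [← hx]
    have hexp : Matrix.vecMul (Matrix.vecMul x B⁻¹) B
        = ∑ i, (Matrix.vecMul x B⁻¹) i • (fun j => B i j) := by
      funext j
      simp [vecMul, dotProduct, Finset.sum_apply]
    rw [hexp]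
    exact Submodule.sum_mem _ fun i _ =>
      Submodule.smul_mem _ _ (Submodule.subset_span (hrow i))
end
end

section
/- For every t ≥ 1 and n = 2^t, the minimum squared distances of the Barnes–Wall lattices satisfy d(BW_{2n}) = 2·d(BW_n) and d(RBW_n) = 2·d(BW_n); consequently d(BW_{2^t}) = 2^{t−1} for all t ≥ 1, i.e., d(BW_n) = n/2. -/
open Matrix

noncomputable section

lemma sum_range_two_mul {M : Type*} [AddCommMonoid M] (m : ℕ) (f : ℕ → M) :
    ∑ i ∈ Finset.range (2 * m), f i = ∑ k ∈ Finset.range m, (f (2 * k) + f (2 * k + 1)) := by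
  induction m with
  | zero => simp
  | succ m ih =>
      have h : 2 * (m + 1) = (2 * m) + 1 + 1 := by ring
      rw [h, Finset.sum_range_succ, Finset.sum_range_succ, ih, Finset.sum_range_succ,
        add_assoc]

lemma fin_sum_eq (n : ℕ) (g : Fin n → ℝ) :
    ∑ i, g i = ∑ i ∈ Finset.range n, if h : i < n then g ⟨i, h⟩ else 0 := by
  rw [← Fin.sum_univ_eq_sum_range]
  exact Finset.sum_congr rfl fun i _ => by simp [i.isLt]

lemma vecMul_Rmat_pair (n k : ℕ) (hk : 2 * k + 1 < n) (w : Fin n → ℝ) (j : Fin n)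
    (hj : (j : ℕ) = 2 * k ∨ (j : ℕ) = 2 * k + 1) :
    Matrix.vecMul w (Rmat n) j =
      if (j : ℕ) = 2 * k then w ⟨2 * k, by omega⟩ + w ⟨2 * k + 1, hk⟩
      else w ⟨2 * k, by omega⟩ - w ⟨2 * k + 1, hk⟩ := by
  classical
  have hne : (⟨2 * k, by omega⟩ : Fin n) ≠ ⟨2 * k + 1, hk⟩ := by
    simp only [ne_eq, Fin.mk.injEq]; omega
  have hvm : Matrix.vecMul w (Rmat n) j = ∑ i : Fin n, w i * Rmat n i j := by
    simp [Matrix.vecMul, dotProduct]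
  rw [hvm]
  rw [← Finset.sum_subset
      (Finset.subset_univ ({⟨2 * k, by omega⟩, ⟨2 * k + 1, hk⟩} : Finset (Fin n)))
      (by
        intro i _ hi
        simp only [Finset.mem_insert, Finset.mem_singleton, Fin.ext_iff] at hi
        push_neg at hi
        have hiv : ¬ ((i : ℕ) / 2 = (j : ℕ) / 2) := by omega
        simp [Rmat, hiv])]
  rw [Finset.sum_pair hne]
  rcases hj with h | h
  · rw [if_pos h]
    have h1 : Rmat n ⟨2 * k, by omega⟩ j = 1 := by
      simp only [Rmat, Matrix.of_apply]
      rw [if_pos (by omega), if_neg (by omega)]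
    have h2 : Rmat n ⟨2 * k + 1, hk⟩ j = 1 := by
      simp only [Rmat, Matrix.of_apply]
      rw [if_pos (by omega), if_neg (by omega)]
    rw [h1, h2]; ring
  · rw [if_neg (by omega)]
    have h1 : Rmat n ⟨2 * k, by omega⟩ j = 1 := by
      simp only [Rmat, Matrix.of_apply]
      rw [if_pos (by omega), if_neg (by omega)]
    have h2 : Rmat n ⟨2 * k + 1, hk⟩ j = -1 := by
      simp only [Rmat, Matrix.of_apply]
      rw [if_pos (by omega), if_pos (by omega)]
    rw [h1, h2]; ring

lemma sqnorm_zero {m : ℕ} : sqnorm (0 : Fin m → ℝ) = 0 := by simp [sqnorm]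

lemma sqnorm_neg {m : ℕ} (x : Fin m → ℝ) : sqnorm (-x) = sqnorm x := by simp [sqnorm]

lemma ne_zero_of_sqnorm {m : ℕ} {x : Fin m → ℝ} {c : ℝ} (h : sqnorm x = c) (hc : 0 < c) :
    x ≠ 0 := by
  rintro rfl
  rw [sqnorm_zero] at h
  linarith

lemma sqnorm_vecMul_Rmat (n m : ℕ) (hn : n = 2 * m) (w : Fin n → ℝ) :
    sqnorm (Matrix.vecMul w (Rmat n)) = 2 * sqnorm w := by
  subst hn
  unfold sqnorm
  rw [fin_sum_eq, fin_sum_eq (2 * m) (fun i => w i ^ 2), sum_range_two_mul, sum_range_two_mul,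
    Finset.mul_sum]
  apply Finset.sum_congr rfl
  intro k hk
  have hk' : k < m := Finset.mem_range.mp hk
  have h1 : 2 * k + 1 < 2 * m := by omega
  rw [dif_pos (by omega : 2 * k < 2 * m), dif_pos h1, dif_pos (by omega : 2 * k < 2 * m),
    dif_pos h1]
  rw [vecMul_Rmat_pair (2 * m) k h1 w ⟨2 * k, by omega⟩ (Or.inl rfl),
    vecMul_Rmat_pair (2 * m) k h1 w ⟨2 * k + 1, h1⟩ (Or.inr rfl)]
  rw [if_pos rfl]
  split_ifs with hc
  · exfalso; simp only [Fin.mk.injEq] at hc ⊢; omega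
  · ring

lemma vecMul_Rmat_one (w : Fin (2 ^ 0) → ℝ) : Matrix.vecMul w (Rmat (2 ^ 0)) = w := by
  funext j
  have hvm : Matrix.vecMul w (Rmat (2 ^ 0)) j = ∑ i : Fin (2 ^ 0), w i * Rmat (2 ^ 0) i j := by
    simp [Matrix.vecMul, dotProduct]
  rw [hvm]
  have hj : j = ⟨0, by norm_num⟩ := by
    have := j.isLt
    exact Fin.ext (by simpa using Nat.lt_one_iff.mp (by simpa using this))
  subst hj
  rw [show (Finset.univ : Finset (Fin (2 ^ 0))) = {⟨0, by norm_num⟩} from rfl]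
  rw [Finset.sum_singleton]
  have : Rmat (2 ^ 0) ⟨0, by norm_num⟩ ⟨0, by norm_num⟩ = 1 := by
    simp [Rmat]
  rw [this, mul_one]

lemma concat_add {t : ℕ} (u1 v1 u2 v2 : Fin (2 ^ t) → ℝ) :
    concat u1 v1 + concat u2 v2 = concat (u1 + u2) (v1 + v2) := by
  funext i
  simp only [Pi.add_apply, concat]
  split <;> simp

lemma concat_zero {t : ℕ} : concat (0 : Fin (2 ^ t) → ℝ) 0 = 0 := by
  funext i
  simp only [concat]
  split <;> simp

lemma sqnorm_concat {t : ℕ} (u v : Fin (2 ^ t) → ℝ) :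
    sqnorm (concat u v) = sqnorm u + sqnorm v := by
  unfold sqnorm
  rw [fin_sum_eq]
  have hn : 2 ^ (t + 1) = 2 ^ t + 2 ^ t := by rw [pow_succ]; ring
  rw [show ∀ f : ℕ → ℝ, ∑ i ∈ Finset.range (2 ^ (t + 1)), f i
      = ∑ i ∈ Finset.range (2 ^ t), f i + ∑ i ∈ Finset.range (2 ^ t), f (2 ^ t + i) from
    fun f => by rw [hn, Finset.sum_range_add]]
  congr 1
  · rw [fin_sum_eq (2 ^ t) (fun i => u i ^ 2)]
    apply Finset.sum_congr rfl
    intro i hi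
    have hi' : i < 2 ^ t := Finset.mem_range.mp hi
    rw [dif_pos (by omega : i < 2 ^ (t + 1)), dif_pos hi']
    have : concat u v ⟨i, by omega⟩ = u ⟨i, hi'⟩ := by
      simp only [concat]
      rw [dif_pos]
      exact hi'
    rw [this]
  · rw [fin_sum_eq (2 ^ t) (fun i => v i ^ 2)]
    apply Finset.sum_congr rfl
    intro i hi
    have hi' : i < 2 ^ t := Finset.mem_range.mp hi
    rw [dif_pos (by omega : 2 ^ t + i < 2 ^ (t + 1)), dif_pos hi']
    have : concat u v ⟨2 ^ t + i, by omega⟩ = v ⟨i, hi'⟩ := by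
      simp only [concat]
      rw [dif_neg (by simp), ]
      congr 1
      simp only [Fin.mk.injEq]
      omega
    rw [this]

lemma vecMul_concat {t : ℕ} (ht : 1 ≤ t) (u v : Fin (2 ^ t) → ℝ) :
    Matrix.vecMul (concat u v) (Rmat (2 ^ (t + 1))) =
      concat (Matrix.vecMul u (Rmat (2 ^ t))) (Matrix.vecMul v (Rmat (2 ^ t))) := by
  obtain ⟨s, hs⟩ : ∃ s, 2 ^ t = 2 * s := ⟨2 ^ (t - 1), by
    obtain ⟨r, rfl⟩ : ∃ r, t = r + 1 := ⟨t - 1, by omega⟩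
    simp [pow_succ, Nat.add_sub_cancel]; ring⟩
  have hn : 2 ^ (t + 1) = 2 * 2 ^ t := by rw [pow_succ]; ring
  funext j
  have hjlt := j.isLt
  set k := (j : ℕ) / 2 with hkdef
  have hk1 : 2 * k + 1 < 2 ^ (t + 1) := by omega
  have hjcases : (j : ℕ) = 2 * k ∨ (j : ℕ) = 2 * k + 1 := by omega
  rw [vecMul_Rmat_pair (2 ^ (t + 1)) k hk1 (concat u v) j hjcases]
  by_cases hlt : (j : ℕ) < 2 ^ t
  · have hk2 : 2 * k + 1 < 2 ^ t := by omega
    have hrhs : concat (Matrix.vecMul u (Rmat (2 ^ t))) (Matrix.vecMul v (Rmat (2 ^ t))) j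
        = Matrix.vecMul u (Rmat (2 ^ t)) ⟨j, hlt⟩ := by
      simp only [concat]; rw [dif_pos]
    rw [hrhs, vecMul_Rmat_pair (2 ^ t) k hk2 u ⟨j, hlt⟩ (by simpa using hjcases)]
    have c0 : concat u v ⟨2 * k, by omega⟩ = u ⟨2 * k, by omega⟩ := by
      simp only [concat]; rw [dif_pos]; omega
    have c1 : concat u v ⟨2 * k + 1, hk1⟩ = u ⟨2 * k + 1, hk2⟩ := by
      simp only [concat]; rw [dif_pos]; omega
    rw [c0, c1]
  · set k' := k - s with hk'def
    have hks : 2 * k - 2 ^ t = 2 * k' := by omega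
    have hk2 : 2 * k' + 1 < 2 ^ t := by omega
    have hrhs : concat (Matrix.vecMul u (Rmat (2 ^ t))) (Matrix.vecMul v (Rmat (2 ^ t))) j
        = Matrix.vecMul v (Rmat (2 ^ t)) ⟨(j : ℕ) - 2 ^ t, by omega⟩ := by
      simp only [concat]; rw [dif_neg hlt]
    rw [hrhs, vecMul_Rmat_pair (2 ^ t) k' hk2 v ⟨(j : ℕ) - 2 ^ t, by omega⟩ (by simp; omega)]
    have c0 : concat u v ⟨2 * k, by omega⟩ = v ⟨2 * k', by omega⟩ := by
      simp only [concat]; rw [dif_neg (by simp; omega)]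
      congr 1
      simp only [Fin.mk.injEq]
      omega
    have c1 : concat u v ⟨2 * k + 1, hk1⟩ = v ⟨2 * k' + 1, hk2⟩ := by
      simp only [concat]; rw [dif_neg (by simp; omega)]
      congr 1
      simp only [Fin.mk.injEq]
      omega
    rw [c0, c1]
    rcases hjcases with h | h
    · rw [if_pos h, if_pos (show ((⟨(j:ℕ) - 2 ^ t, by omega⟩ : Fin (2 ^ t)) : ℕ) = 2 * k' by simp only [Fin.mk.injEq]; omega)]
    · rw [if_neg (show ¬ (j:ℕ) = 2 * k by omega),
        if_neg (show ¬ ((⟨(j:ℕ) - 2 ^ t, by omega⟩ : Fin (2 ^ t)) : ℕ) = 2 * k' by simp only [Fin.mk.injEq]; omega)]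

lemma bw_zero : ∀ t, (0 : Fin (2 ^ t) → ℝ) ∈ BW t
  | 0 => fun i => ⟨0, by simp⟩
  | (t + 1) => ⟨0, 0, bw_zero t, ⟨0, bw_zero t, (Matrix.zero_vecMul _).symm⟩,
      by rw [add_zero, concat_zero]⟩

lemma bw_add : ∀ t, ∀ x y : Fin (2 ^ t) → ℝ, x ∈ BW t → y ∈ BW t → x + y ∈ BW t := by
  intro t
  induction t with
  | zero =>
    intro x y hx hy i
    obtain ⟨a, ha⟩ := hx i
    obtain ⟨b, hb⟩ := hy i
    exact ⟨a + b, by simp [ha, hb]⟩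
  | succ t ih =>
    rintro x y ⟨u1, v1, hu1, ⟨w1, hw1, rfl⟩, rfl⟩ ⟨u2, v2, hu2, ⟨w2, hw2, rfl⟩, rfl⟩
    refine ⟨u1 + u2, Matrix.vecMul w1 (Rmat (2 ^ t)) + Matrix.vecMul w2 (Rmat (2 ^ t)),
      ih _ _ hu1 hu2, ⟨w1 + w2, ih _ _ hw1 hw2, (Matrix.add_vecMul _ _ _).symm⟩, ?_⟩
    rw [concat_add]
    congr 1
    abel

lemma vecMul_int (n m : ℕ) (hn : n = 2 * m) (w : Fin n → ℝ)
    (hw : ∀ i, ∃ z : ℤ, w i = (z : ℝ)) :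
    ∀ j, ∃ z : ℤ, Matrix.vecMul w (Rmat n) j = (z : ℝ) := by
  intro j
  have hj := j.isLt
  set k := (j : ℕ) / 2 with hk
  have hk1 : 2 * k + 1 < n := by omega
  rw [vecMul_Rmat_pair n k hk1 w j (by omega)]
  obtain ⟨a, ha⟩ := hw ⟨2 * k, by omega⟩
  obtain ⟨b, hb⟩ := hw ⟨2 * k + 1, hk1⟩
  split
  · exact ⟨a + b, by push_cast [ha, hb]; ring⟩
  · exact ⟨a - b, by push_cast [ha, hb]; ring⟩

lemma bw_int : ∀ t, ∀ x ∈ BW t, ∀ i, ∃ z : ℤ, x i = (z : ℝ) := by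
  intro t
  induction t with
  | zero => exact fun x hx => hx
  | succ t ih =>
    rintro x ⟨u, v, hu, ⟨w, hw, rfl⟩, rfl⟩ i
    have hvint : ∀ i, ∃ z : ℤ, Matrix.vecMul w (Rmat (2 ^ t)) i = (z : ℝ) := by
      rcases Nat.eq_zero_or_pos t with rfl | ht
      · intro i
        obtain ⟨z, hz⟩ := ih w hw i
        exact ⟨z, by rw [vecMul_Rmat_one]; exact hz⟩
      · exact vecMul_int (2 ^ t) (2 ^ (t - 1))
          (by obtain ⟨r, rfl⟩ : ∃ r, t = r + 1 := ⟨t - 1, by omega⟩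
              simp [pow_succ, Nat.add_sub_cancel]; ring) w (ih w hw)
    simp only [concat]
    split
    · exact ih u hu _
    · next h =>
      have hlt2 : (i : ℕ) - 2 ^ t < 2 ^ t := by
        have h1 := i.isLt
        have h2 : 2 ^ (t + 1) = 2 ^ t * 2 := pow_succ 2 t
        omega
      obtain ⟨a, ha⟩ := ih u hu ⟨(i : ℕ) - 2 ^ t, hlt2⟩
      obtain ⟨b, hb⟩ := hvint ⟨(i : ℕ) - 2 ^ t, hlt2⟩
      refine ⟨a + b, ?_⟩
      rw [Pi.add_apply, ha, hb]
      push_cast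
      ring

lemma int_mem_bw1 (x : Fin (2 ^ 1) → ℝ) (hx : ∀ i, ∃ z : ℤ, x i = (z : ℝ)) : x ∈ BW 1 := by
  refine ⟨fun _ => x ⟨0, by norm_num⟩,
    fun _ => x ⟨1, by norm_num⟩ - x ⟨0, by norm_num⟩,
    fun i => hx _, ⟨_, fun i => ?_, (vecMul_Rmat_one _).symm⟩, ?_⟩
  · obtain ⟨a, ha⟩ := hx ⟨1, by norm_num⟩
    obtain ⟨b, hb⟩ := hx ⟨0, by norm_num⟩
    refine ⟨a - b, ?_⟩
    show x ⟨1, by norm_num⟩ - x ⟨0, by norm_num⟩ = ((a - b : ℤ) : ℝ)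
    rw [ha, hb]
    push_cast
    ring
  · funext i
    simp only [concat, Pi.add_apply]
    split
    · next h =>
      congr 1
      exact Fin.ext (by have h0 := Nat.lt_one_iff.mp (by simpa only [pow_zero] using h); simp [h0])
    · next h =>
      have hi : i = ⟨1, by norm_num⟩ := Fin.ext (by
        have := i.isLt
        simp only [pow_succ, pow_zero, one_mul] at this ⊢
        omega)
      rw [hi]
      ring

lemma rbw_subset : ∀ t, RBW t ⊆ BW t := by
  intro t
  induction t with
  | zero =>
    rintro x ⟨w, hw, rfl⟩ i
    obtain ⟨z, hz⟩ := hw i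
    refine ⟨z, ?_⟩
    show Matrix.vecMul w (Rmat (2 ^ 0)) i = (z : ℝ)
    rw [vecMul_Rmat_one]; exact hz
  | succ t ih =>
    rcases Nat.eq_zero_or_pos t with rfl | ht
    · -- RBW 1 ⊆ BW 1
      rintro x ⟨y, hy, rfl⟩
      apply int_mem_bw1
      exact vecMul_int (2 ^ 1) 1 (by norm_num) y (bw_int 1 y hy)
    · rintro x ⟨y, ⟨u, v, hu, ⟨w, hw, rfl⟩, rfl⟩, rfl⟩
      refine ⟨Matrix.vecMul u (Rmat (2 ^ t)),
        Matrix.vecMul (Matrix.vecMul w (Rmat (2 ^ t))) (Rmat (2 ^ t)),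
        ih ⟨u, hu, rfl⟩,
        ⟨Matrix.vecMul w (Rmat (2 ^ t)), ih ⟨w, hw, rfl⟩, rfl⟩, ?_⟩
      show Matrix.vecMul (concat u (u + Matrix.vecMul w (Rmat (2 ^ t)))) (Rmat (2 ^ (t + 1))) = _
      rw [vecMul_concat ht, Matrix.add_vecMul]

def cBW (t : ℕ) : ℝ := (2 : ℝ) ^ (t - 1)

lemma cBW_pos (t : ℕ) : 0 < cBW t := pow_pos (by norm_num) _

lemma cBW_succ {t : ℕ} (ht : 1 ≤ t) : cBW (t + 1) = 2 * cBW t := by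
  obtain ⟨r, rfl⟩ : ∃ r, t = r + 1 := ⟨t - 1, by omega⟩
  show (2 : ℝ) ^ (r + 1 + 1 - 1) = 2 * 2 ^ (r + 1 - 1)
  simp only [Nat.add_sub_cancel]
  rw [pow_succ]
  ring

lemma cBW_le (t : ℕ) : cBW (t + 1) ≤ 2 * cBW t := by
  rcases Nat.eq_zero_or_pos t with rfl | ht
  · show (2:ℝ) ^ (1 - 1) ≤ 2 * 2 ^ (0 - 1)
    norm_num
  · rw [cBW_succ ht]

lemma minDist_eq {m : ℕ} (Λ : Set (Fin m → ℝ)) (c : ℝ)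
    (lb : ∀ x ∈ Λ, x ≠ 0 → c ≤ sqnorm x)
    (ex : ∃ x ∈ Λ, x ≠ 0 ∧ sqnorm x = c) : minDist Λ = c := by
  obtain ⟨x0, hx0, hx0ne, hx0n⟩ := ex
  have hmem : c ∈ sqnorm '' {x ∈ Λ | x ≠ 0} := ⟨x0, ⟨hx0, hx0ne⟩, hx0n⟩
  have hlb : ∀ y ∈ sqnorm '' {x ∈ Λ | x ≠ 0}, c ≤ y := by
    rintro y ⟨x, ⟨hx, hxne⟩, rfl⟩
    exact lb x hx hxne
  exact le_antisymm (csInf_le ⟨c, hlb⟩ hmem) (le_csInf ⟨c, hmem⟩ hlb)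

lemma bw_bounds : ∀ t, (∀ x ∈ BW t, x ≠ 0 → cBW t ≤ sqnorm x) ∧
    (∃ x ∈ BW t, x ≠ 0 ∧ sqnorm x = cBW t) := by
  intro t
  induction t with
  | zero =>
    constructor
    · intro x hx hxne
      obtain ⟨i, hi⟩ : ∃ i, x i ≠ 0 := by
        by_contra h
        push_neg at h
        exact hxne (funext h)
      obtain ⟨z, hz⟩ := hx i
      have hz0 : z ≠ 0 := by
        rintro rfl
        rw [hz] at hi
        simp at hi
      have h1 : (1 : ℝ) ≤ x i ^ 2 := by
        rw [hz]
        have h3 : (1 : ℤ) ≤ z ^ 2 := by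
          have := Int.one_le_abs hz0
          nlinarith [abs_nonneg z, sq_abs z]
        exact_mod_cast h3
      have h2 : x i ^ 2 ≤ sqnorm x :=
        Finset.single_le_sum (f := fun i => x i ^ 2) (fun j _ => sq_nonneg _)
          (Finset.mem_univ i)
      show (2:ℝ) ^ (0 - 1) ≤ sqnorm x
      norm_num
      linarith
    · refine ⟨fun _ => 1, fun i => ⟨1, by norm_num⟩, ?_, ?_⟩
      · intro h
        have := congrFun h ⟨0, by norm_num⟩
        norm_num at this
      · show sqnorm _ = (2:ℝ) ^ (0 - 1)
        simp [sqnorm]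
  | succ t ih =>
    obtain ⟨lb, x0, hx0, hx0ne, hx0n⟩ := ih
    have key : ∀ w ∈ BW t, Matrix.vecMul w (Rmat (2 ^ t)) ≠ 0 →
        cBW (t + 1) ≤ sqnorm (Matrix.vecMul w (Rmat (2 ^ t))) := by
      intro w hw hne
      have hwne : w ≠ 0 := by
        rintro rfl
        exact hne (Matrix.zero_vecMul _)
      rcases Nat.eq_zero_or_pos t with rfl | ht
      · rw [vecMul_Rmat_one]
        have h1 := lb w hw hwne
        have : cBW 1 = cBW 0 := by norm_num [cBW]
        linarith [this ▸ h1]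
      · rw [sqnorm_vecMul_Rmat (2 ^ t) (2 ^ (t - 1))
          (by obtain ⟨r, rfl⟩ : ∃ r, t = r + 1 := ⟨t - 1, by omega⟩
              simp [pow_succ, Nat.add_sub_cancel]; ring) w]
        rw [cBW_succ ht]
        have := lb w hw hwne
        linarith
    constructor
    · rintro x ⟨u, v, hu, ⟨w, hw, hv⟩, rfl⟩ hxne
      have hvBW : v ∈ BW t := rbw_subset t ⟨w, hw, hv.symm⟩
      have hsBW : u + v ∈ BW t := bw_add t u v hu hvBW
      have keyv : v ≠ 0 → cBW (t + 1) ≤ sqnorm v := by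
        intro hne
        have := key w hw (by rw [← hv]; exact hne)
        rwa [← hv] at this
      rw [sqnorm_concat]
      by_cases hu0 : u = 0
      · subst hu0
        have hvne : v ≠ 0 := by
          rintro rfl
          apply hxne
          rw [add_zero, concat_zero]
        have := keyv hvne
        rw [sqnorm_zero, zero_add, zero_add]
        exact this
      · by_cases hs0 : u + v = 0
        · have hvne : v ≠ 0 := by
            rintro rfl
            rw [add_zero] at hs0
            exact hu0 hs0
          have huv : u = -v := eq_neg_of_add_eq_zero_left hs0
          have := keyv hvne
          rw [hs0, sqnorm_zero, add_zero, huv, sqnorm_neg]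
          exact this
        · have h1 := lb u hu hu0
          have h2 := lb (u + v) hsBW hs0
          have h3 := cBW_le t
          linarith
    · rcases Nat.eq_zero_or_pos t with rfl | ht
      · refine ⟨concat 0 (0 + Matrix.vecMul x0 (Rmat (2 ^ 0))),
          ⟨0, Matrix.vecMul x0 (Rmat (2 ^ 0)), bw_zero 0, ⟨x0, hx0, rfl⟩, rfl⟩, ?_, ?_⟩
        · apply ne_zero_of_sqnorm (c := cBW 1) _ (cBW_pos 1)
          rw [sqnorm_concat, vecMul_Rmat_one, zero_add, sqnorm_zero, zero_add, hx0n]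
          norm_num [cBW]
        · rw [sqnorm_concat, vecMul_Rmat_one, zero_add, sqnorm_zero, zero_add, hx0n]
          norm_num [cBW]
      · refine ⟨concat x0 (x0 + 0),
          ⟨x0, 0, hx0, ⟨0, bw_zero t, (Matrix.zero_vecMul _).symm⟩, rfl⟩, ?_, ?_⟩
        · apply ne_zero_of_sqnorm (c := cBW (t + 1)) _ (cBW_pos _)
          rw [add_zero, sqnorm_concat, hx0n, cBW_succ ht]
          ring
        · rw [add_zero, sqnorm_concat, hx0n, cBW_succ ht]
          ring

lemma bw_minDist (t : ℕ) : minDist (BW t) = cBW t :=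
  minDist_eq _ _ (bw_bounds t).1 (bw_bounds t).2

lemma rbw_minDist (t : ℕ) (ht : 1 ≤ t) : minDist (RBW t) = 2 * cBW t := by
  obtain ⟨lb, x0, hx0, hx0ne, hx0n⟩ := bw_bounds t
  have hfac : ∀ w : Fin (2 ^ t) → ℝ,
      sqnorm (Matrix.vecMul w (Rmat (2 ^ t))) = 2 * sqnorm w :=
    fun w => sqnorm_vecMul_Rmat (2 ^ t) (2 ^ (t - 1))
      (by obtain ⟨r, rfl⟩ : ∃ r, t = r + 1 := ⟨t - 1, by omega⟩
          simp [pow_succ, Nat.add_sub_cancel]; ring) w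
  apply minDist_eq
  · rintro y ⟨w, hw, rfl⟩ hyne
    have hwne : w ≠ 0 := by
      rintro rfl
      exact hyne (Matrix.zero_vecMul _)
    show 2 * cBW t ≤ sqnorm (Matrix.vecMul w (Rmat (2 ^ t)))
    rw [hfac]
    have := lb w hw hwne
    linarith
  · refine ⟨Matrix.vecMul x0 (Rmat (2 ^ t)), ⟨x0, hx0, rfl⟩, ?_, ?_⟩
    · apply ne_zero_of_sqnorm (c := 2 * cBW t) _ (by linarith [cBW_pos t])
      rw [hfac, hx0n]
    · rw [hfac, hx0n]

/-- `d(BW_{2n}) = 2·d(BW_n)`, `d(RBW_n) = 2·d(BW_n)`, and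
consequently `d(BW_{2^t}) = 2^{t−1}`, i.e. `d(BW_n) = n/2`. -/
theorem bw_min_dist :
    ∀ t : ℕ, 1 ≤ t →
      minDist (BW (t + 1)) = 2 * minDist (BW t) ∧
      minDist (RBW t) = 2 * minDist (BW t) ∧
      minDist (BW t) = (2 : ℝ) ^ (t - 1) := by
  intro t ht
  refine ⟨?_, ?_, ?_⟩
  · rw [bw_minDist, bw_minDist, cBW_succ ht]
  · rw [rbw_minDist t ht, bw_minDist]
  · rw [bw_minDist]
    rfl
end
end
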